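/- Let Φ ∈ S(ℝⁿ) with supp(Φ) ⊂ B_{1/4}(0). Then there is C > 0 such that sup_{t>0}|(Φ_t^d ∗ b)(j)| ≤ C(Mb)(j) for every j ∈ ℤⁿ and every bounded sequence b on ℤⁿ, where M is the centered discrete Hardy–Littlewood maximal operator. -/

import Mathlib

open scoped BigOperators ENNReal

noncomputable section

/-- Euclidean norm of an integer vector in `ℤⁿ`. -/
def znorm {n : ℕ} (j : Fin n → ℤ) : ℝ := Real.sqrt (∑ l, ((j l : ℝ)) ^ 2)

/-- `ℓ^∞` norm of an integer vector, as a natural number. -/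
def zinf {n : ℕ} (j : Fin n → ℤ) : ℕ := Finset.univ.sup fun l => (j l).natAbs

/-- The discrete cube centered at `k0` with "radius" `m` (side length `2m+1`),
i.e. `{i : |i - k0|_∞ ≤ m}`. -/
def dcube {n : ℕ} (k0 : Fin n → ℤ) (m : ℕ) : Finset (Fin n → ℤ) :=
  Finset.Icc (fun l => k0 l - m) (fun l => k0 l + m)

/-- The discrete Riesz potential `(I_α b)(j) = ∑_{i ≠ j} b(i) |i-j|^{α-n}`. -/
def rieszPot {n : ℕ} (α : ℝ) (b : (Fin n → ℤ) → ℝ) (j : Fin n → ℤ) : ℝ :=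
  ∑' i : {i : Fin n → ℤ // i ≠ j}, b i.1 * znorm (i.1 - j) ^ (α - n)

/-- Embedding of `ℤⁿ` into Euclidean space `ℝⁿ`. -/
def toE {n : ℕ} (j : Fin n → ℤ) : EuclideanSpace ℝ (Fin n) := WithLp.toLp 2 (fun l => (j l : ℝ))

/-- The discretized dilation `Φ_t^d(j) = t^{-n} Φ(j/t)` for `j ≠ 0`, and `Φ_t^d(0) = 0`. -/
def phid {n : ℕ} (Φ : SchwartzMap (EuclideanSpace ℝ (Fin n)) ℝ) (t : ℝ) (j : Fin n → ℤ) : ℝ :=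
  if j = 0 then 0 else t ^ (-(n : ℝ)) * Φ (t⁻¹ • toE j)

/-- Discrete convolution `(b ∗ c)(j) = ∑_i b(i) c(j-i)`. -/
def dconv {n : ℕ} (b c : (Fin n → ℤ) → ℝ) (j : Fin n → ℤ) : ℝ :=
  ∑' i : Fin n → ℤ, b i * c (j - i)

/-- The maximal function `sup_{t>0} |(Φ_t^d ∗ b)(j)|`, valued in `ℝ≥0∞`. -/
def maxFn {n : ℕ} (Φ : SchwartzMap (EuclideanSpace ℝ (Fin n)) ℝ) (b : (Fin n → ℤ) → ℝ)
    (j : Fin n → ℤ) : ℝ≥0∞ :=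
  ⨆ (t : ℝ) (_ : 0 < t), ENNReal.ofReal |dconv (phid Φ t) b j|

/-- The `ℓ^p` quasinorm (`0 < p < ∞`) of a real sequence on `ℤⁿ`, valued in `ℝ≥0∞`. -/
def elp {n : ℕ} (p : ℝ) (f : (Fin n → ℤ) → ℝ) : ℝ≥0∞ :=
  (∑' j : Fin n → ℤ, ENNReal.ofReal |f j| ^ p) ^ (1 / p)

/-- The `ℓ^p` quasinorm of an `ℝ≥0∞`-valued sequence on `ℤⁿ`. -/
def elpE {n : ℕ} (p : ℝ) (f : (Fin n → ℤ) → ℝ≥0∞) : ℝ≥0∞ :=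
  (∑' j : Fin n → ℤ, f j ^ p) ^ (1 / p)

/-- The discrete Hardy space quasinorm `‖b‖_{H^p} = ‖b‖_{ℓ^p} + ‖sup_{t>0}|Φ_t^d ∗ b|‖_{ℓ^p}`. -/
def hpNorm {n : ℕ} (Φ : SchwartzMap (EuclideanSpace ℝ (Fin n)) ℝ) (p : ℝ)
    (b : (Fin n → ℤ) → ℝ) : ℝ≥0∞ :=
  elp p b + elpE p (maxFn Φ b)

/-- A `(p, ∞, N)`-atom supported in the discrete cube `dcube k0 m`. -/
def IsDiscreteAtom {n : ℕ} (p : ℝ) (N : ℕ) (k0 : Fin n → ℤ) (m : ℕ)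
    (a : (Fin n → ℤ) → ℝ) : Prop :=
  (∀ j, j ∉ dcube k0 m → a j = 0) ∧
  (∀ j, |a j| ≤ ((dcube k0 m).card : ℝ) ^ (-(1 / p))) ∧
  (∀ β : Fin n → ℕ, (∑ l, β l) ≤ N →
    ∑ j ∈ dcube k0 m, (∏ l, ((j l : ℝ)) ^ β l) * a j = 0)

/-- The centered discrete fractional maximal operator
`(M_α b)(j) = sup_m (#Q_{j,m})^{α/n - 1} ∑_{i ∈ Q_{j,m}} |b(i)|`. -/
def fracMax {n : ℕ} (α : ℝ) (b : (Fin n → ℤ) → ℝ) (j : Fin n → ℤ) : ℝ≥0∞ :=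
  ⨆ m : ℕ, ENNReal.ofReal
    ((((dcube j m).card : ℝ) ^ (α / n - 1)) * ∑ i ∈ dcube j m, |b i|)

/-- The Taylor polynomial of degree `N - 1` of `f` centered at `c`, evaluated at `x`. -/
def taylorPoly {n : ℕ} (f : EuclideanSpace ℝ (Fin n) → ℝ) (c x : EuclideanSpace ℝ (Fin n))
    (N : ℕ) : ℝ :=
  ∑ r ∈ Finset.range N, (1 / r.factorial : ℝ) * iteratedFDeriv ℝ r f c (fun _ => x - c)

lemma coord_le_norm {n : ℕ} (x : EuclideanSpace ℝ (Fin n)) (l : Fin n) : |x l| ≤ ‖x‖ := by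
  rw [EuclideanSpace.norm_eq, ← Real.sqrt_sq_eq_abs]
  apply Real.sqrt_le_sqrt
  have : |x l| ^ 2 ≤ ∑ i, ‖x i‖ ^ 2 := by
    have := Finset.single_le_sum (f := fun i => ‖x i‖ ^ 2)
      (fun i _ => by positivity) (Finset.mem_univ l)
    simpa [Real.norm_eq_abs] using this
  simpa [sq_abs] using this

lemma dcube_card {n : ℕ} (k : Fin n → ℤ) (m : ℕ) :
    (dcube k m).card = (2 * m + 1) ^ n := by
  rw [dcube, Pi.card_Icc]
  have : ∀ l : Fin n, (Finset.Icc (k l - (m : ℤ)) (k l + (m : ℤ))).card = 2 * m + 1 := by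
    intro l
    rw [Int.card_Icc]
    have : k l + (m : ℤ) + 1 - (k l - (m : ℤ)) = 2 * m + 1 := by ring
    rw [this]
    omega
  simp [this]

lemma mem_dcube {n : ℕ} (k j : Fin n → ℤ) (m : ℕ) :
    j ∈ dcube k m ↔ ∀ l, (j l - k l).natAbs ≤ m := by
  rw [dcube, Finset.mem_Icc]
  simp only [Pi.le_def]
  constructor
  · intro h l
    have h1 := h.1 l
    have h2 := h.2 l
    omega
  · intro h
    refine ⟨fun l => ?_, fun l => ?_⟩ <;> (have := h l; omega)

/-- pointwise bound `sup_{t>0} |(Φ_t^d ∗ b)(j)| ≤ C (Mb)(j)` for bounded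
sequences `b`, where `M = M_0` is the centered discrete Hardy–Littlewood maximal operator. -/
theorem stmt13 (n : ℕ) (Φ : SchwartzMap (EuclideanSpace ℝ (Fin n)) ℝ)
    (hΦ : Function.support (⇑Φ) ⊆ Metric.ball 0 (1 / 4)) :
    ∃ C > (0 : ℝ), ∀ b : (Fin n → ℤ) → ℝ, (∃ M, ∀ i, |b i| ≤ M) →
      ∀ j : Fin n → ℤ, maxFn Φ b j ≤ ENNReal.ofReal C * fracMax 0 b j := by
  obtain ⟨A, hA0, hA⟩ := Φ.decay 0 0
  have hAbs : ∀ x, |Φ x| ≤ A := by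
    intro x
    have := hA x
    simpa [Real.norm_eq_abs] using this
  -- key fact: the Euclidean norm of a nonzero integer vector is ≥ 1
  have hge1 : ∀ i : Fin n → ℤ, i ≠ 0 → (1 : ℝ) ≤ ‖toE i‖ := by
    intro i hi
    obtain ⟨l, hl⟩ : ∃ l, i l ≠ 0 := by
      by_contra h
      push_neg at h
      exact hi (funext h)
    have h1 : (1 : ℝ) ≤ |toE i l| := by
      have : (1 : ℤ) ≤ |i l| := Int.one_le_abs hl
      have : (1 : ℝ) ≤ |(i l : ℝ)| := by
        rw [← Int.cast_abs]
        exact_mod_cast this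
      simpa [toE] using this
    exact h1.trans (coord_le_norm _ _)
  refine ⟨A, hA0, ?_⟩
  intro b _ j
  apply iSup_le; intro t; apply iSup_le; intro ht
  by_cases h4 : t ≤ 4
  · -- all terms vanish
    have hzero : dconv (phid Φ t) b j = 0 := by
      rw [dconv, tsum_eq_sum (s := (∅ : Finset (Fin n → ℤ))) ?_, Finset.sum_empty]
      intro i _
      rcases eq_or_ne i 0 with hi | hi
      · simp [phid, hi]
      · have hnot : Φ (t⁻¹ • toE i) = 0 := by
          by_contra h
          have hmem := hΦ h
          rw [Metric.mem_ball, dist_zero_right] at hmem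
          have hnorm : ‖t⁻¹ • toE i‖ = t⁻¹ * ‖toE i‖ := by
            rw [norm_smul, Real.norm_eq_abs, abs_of_pos (inv_pos.mpr ht)]
          have h1 : (1 : ℝ) / 4 ≤ t⁻¹ * ‖toE i‖ := by
            have h2 := hge1 i hi
            have h3 : (1:ℝ)/4 ≤ t⁻¹ := by
              rw [le_inv_comm₀ (by norm_num) ht]
              linarith
            calc (1:ℝ)/4 ≤ t⁻¹ := h3
              _ = t⁻¹ * 1 := by ring
              _ ≤ t⁻¹ * ‖toE i‖ := by
                  apply mul_le_mul_of_nonneg_left h2 (le_of_lt (inv_pos.mpr ht))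
          rw [hnorm] at hmem
          linarith
        simp [phid, hi, hnot]
    rw [hzero]
    simp
  · push_neg at h4
    set m := ⌊t / 4⌋₊ with hm
    -- support of the summand is inside dcube 0 m
    have hsupp : ∀ i ∉ dcube (0 : Fin n → ℤ) m, phid Φ t i * b (j - i) = 0 := by
      intro i hi
      rcases eq_or_ne i 0 with h0 | h0
      · simp [phid, h0]
      have hnot : Φ (t⁻¹ • toE i) = 0 := by
        by_contra h
        have hmem := hΦ h
        rw [Metric.mem_ball, dist_zero_right] at hmem
        have hnorm : ‖t⁻¹ • toE i‖ = t⁻¹ * ‖toE i‖ := by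
          rw [norm_smul, Real.norm_eq_abs, abs_of_pos (inv_pos.mpr ht)]
        rw [hnorm] at hmem
        have hlt : ‖toE i‖ < t / 4 := by
          have := (inv_mul_lt_iff₀ ht).mp hmem
          linarith
        -- each coordinate
        apply hi
        rw [mem_dcube]
        intro l
        have h1 : |(i l : ℝ)| ≤ ‖toE i‖ := by
          have := coord_le_norm (toE i) l
          simpa [toE] using this
        have h2 : ((i l).natAbs : ℝ) ≤ t / 4 := by
          rw [Nat.cast_natAbs, Int.cast_abs] at *
          · exact le_of_lt (lt_of_le_of_lt h1 hlt)
        have := Nat.le_floor h2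
        simpa using this
      simp [phid, h0, hnot]
    have hsum : dconv (phid Φ t) b j = ∑ i ∈ dcube (0 : Fin n → ℤ) m, phid Φ t i * b (j - i) :=
      tsum_eq_sum hsupp
    -- bound each term
    have htn : (0 : ℝ) < t ^ (-(n : ℝ)) := Real.rpow_pos_of_pos ht _
    have hterm : ∀ i, |phid Φ t i| ≤ t ^ (-(n : ℝ)) * A := by
      intro i
      rcases eq_or_ne i 0 with h0 | h0
      · simp [phid, h0]
        positivity
      · rw [phid, if_neg h0, abs_mul, abs_of_pos htn]
        exact mul_le_mul_of_nonneg_left (hAbs _) (le_of_lt htn)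
    -- reindex the |b| sum
    have hreindex : ∑ i ∈ dcube (0 : Fin n → ℤ) m, |b (j - i)| = ∑ k ∈ dcube j m, |b k| := by
      apply Finset.sum_nbij' (i := fun i => j - i) (j := fun k => j - k)
      · intro i hi
        rw [mem_dcube] at hi ⊢
        intro l
        have := hi l
        simp at this ⊢
        omega
      · intro k hk
        rw [mem_dcube] at hk ⊢
        intro l
        have := hk l
        simp at this ⊢
        omega
      · intro i _; funext l; simp
      · intro k _; funext l; simp
      · intro i _; rfl
    have habs : |dconv (phid Φ t) b j| ≤ t ^ (-(n : ℝ)) * A * ∑ k ∈ dcube j m, |b k| := by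
      rw [hsum, ← hreindex, Finset.mul_sum]
      refine (Finset.abs_sum_le_sum_abs _ _).trans (Finset.sum_le_sum ?_)
      intro i _
      rw [abs_mul]
      exact mul_le_mul_of_nonneg_right (hterm i) (abs_nonneg _)
    -- compare t^{-n} with card^{-1}
    have hcard : ((dcube j m).card : ℝ) = ((2 * m + 1 : ℕ) : ℝ) ^ n := by
      rw [dcube_card]; push_cast; ring
    have hcardpos : (0 : ℝ) < ((dcube j m).card : ℝ) := by
      rw [hcard]; positivity
    have hcmp : t ^ (-(n : ℝ)) ≤ ((dcube j m).card : ℝ) ^ ((0 : ℝ) / n - 1) := by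
      have h2m : ((2 * m + 1 : ℕ) : ℝ) ≤ t := by
        push_cast
        have h1 : (m : ℝ) ≤ t / 4 := Nat.floor_le (by linarith)
        linarith
      have hrw : ((dcube j m).card : ℝ) ^ ((0 : ℝ) / n - 1) = (((dcube j m).card : ℝ)) ⁻¹ := by
        rw [zero_div]
        rw [show ((0:ℝ) - 1) = -1 by ring, Real.rpow_neg_one]
      rw [hrw]
      have htpow : t ^ (-(n : ℝ)) = (t ^ n)⁻¹ := by
        rw [Real.rpow_neg (le_of_lt ht), Real.rpow_natCast]
      rw [htpow]
      apply inv_anti₀ hcardpos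
      rw [hcard]
      exact pow_le_pow_left₀ (by positivity) h2m n
    -- assemble
    have hsumnn : (0 : ℝ) ≤ ∑ k ∈ dcube j m, |b k| := Finset.sum_nonneg fun _ _ => abs_nonneg _
    have hfinal : |dconv (phid Φ t) b j| ≤
        A * (((dcube j m).card : ℝ) ^ ((0 : ℝ) / n - 1) * ∑ k ∈ dcube j m, |b k|) := by
      calc |dconv (phid Φ t) b j| ≤ t ^ (-(n : ℝ)) * A * ∑ k ∈ dcube j m, |b k| := habs
        _ ≤ ((dcube j m).card : ℝ) ^ ((0 : ℝ) / n - 1) * A * ∑ k ∈ dcube j m, |b k| := by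
            apply mul_le_mul_of_nonneg_right _ hsumnn
            exact mul_le_mul_of_nonneg_right hcmp (le_of_lt hA0)
        _ = A * (((dcube j m).card : ℝ) ^ ((0 : ℝ) / n - 1) * ∑ k ∈ dcube j m, |b k|) := by
            ring
    calc ENNReal.ofReal |dconv (phid Φ t) b j|
        ≤ ENNReal.ofReal (A * (((dcube j m).card : ℝ) ^ ((0 : ℝ) / n - 1) *
            ∑ k ∈ dcube j m, |b k|)) := ENNReal.ofReal_le_ofReal hfinal
      _ = ENNReal.ofReal A * ENNReal.ofReal (((dcube j m).card : ℝ) ^ ((0 : ℝ) / n - 1) *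
            ∑ k ∈ dcube j m, |b k|) := ENNReal.ofReal_mul (le_of_lt hA0)
      _ ≤ ENNReal.ofReal A * fracMax 0 b j := by
          apply mul_le_mul_right
          exact le_iSup (fun m => ENNReal.ofReal
            ((((dcube j m).card : ℝ) ^ ((0:ℝ) / n - 1)) * ∑ i ∈ dcube j m, |b i|)) m
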